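/- Let ν be a Lévy measure on ℝ that is absolutely continuous with respect to Lebesgue measure and satisfies ∫_ℝ y² ν(dy) < ∞ and ν(ℝ) = ∞, let Λ > 0, and let ε > 0 be such that ν({y : y² > ε}) = Λ. Then the truncated measure ν̄_ε(dy) = 1_{{y² > ε}} ν(dy) is a solution of problem Ω_{2,Λ} (minimization of J over finite measures of total mass Λ, with no moment constraints), and the optimal value is E_2(Λ) = ∫_{{y² ≤ ε}} y² ν(dy). -/

import Mathlib

set_option maxHeartbeats 1000000


open MeasureTheory Filter Set
open scoped ENNReal

/-- The total variation measure `|μ - ν| = (μ - μ⊓ν) + (ν - μ⊓ν)` of the difference of two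
positive measures. -/
noncomputable def tvDist (μ ν : Measure ℝ) : Measure ℝ := (μ - μ ⊓ ν) + (ν - μ ⊓ ν)

/-- The functional `J(ν̄) = ∫ y² |ν - ν̄|(dy)`. -/
noncomputable def Jfun2 (ν νb : Measure ℝ) : ℝ≥0∞ :=
  ∫⁻ y, ENNReal.ofReal (y ^ 2) ∂(tvDist ν νb)

/-- The case `n = 2`: the truncated measure `ν̄_ε(dy) = 1_{y²>ε} ν(dy)` solves problem
`Ω_{2,Λ}` (minimization of `J` over finite measures of total mass `Λ`), with optimal value
`E_2(Λ) = ∫_{y²≤ε} y² ν(dy)`. -/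
theorem stmt_8 (ν : Measure ℝ)
    (hν0 : ν {0} = 0) (hac : ν ≪ volume) (hνinf : ν Set.univ = ⊤)
    (hν2 : (∫⁻ y, ENNReal.ofReal (y ^ 2) ∂ν) < ⊤)
    (Λ ε : ℝ) (hΛ : 0 < Λ) (hε : 0 < ε)
    (hmass : ν {y : ℝ | ε < y ^ 2} = ENNReal.ofReal Λ) :
    (∀ νb : Measure ℝ, IsFiniteMeasure νb → νb Set.univ = ENNReal.ofReal Λ →
        Jfun2 ν (ν.restrict {y : ℝ | ε < y ^ 2}) ≤ Jfun2 ν νb) ∧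
    Jfun2 ν (ν.restrict {y : ℝ | ε < y ^ 2}) =
      ∫⁻ y in {y : ℝ | y ^ 2 ≤ ε}, ENNReal.ofReal (y ^ 2) ∂ν := by
  set f : ℝ → ℝ≥0∞ := fun y => ENNReal.ofReal (y ^ 2) with hf
  set A : Set ℝ := {y : ℝ | ε < y ^ 2} with hA
  have hAmeas : MeasurableSet A := by
    apply measurableSet_lt measurable_const
    exact (measurable_id.pow_const 2)
  have hAcompl : Aᶜ = {y : ℝ | y ^ 2 ≤ ε} := by
    ext y; simp [hA, not_lt]
  have hνAfin : ν A ≠ ⊤ := by rw [hmass]; exact ENNReal.ofReal_ne_top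
  have hresfin : IsFiniteMeasure (ν.restrict A) := by
    constructor
    rw [Measure.restrict_apply_univ]
    exact hνAfin.lt_top
  have hresle : ν.restrict A ≤ ν := Measure.restrict_le_self
  have hinf : ν ⊓ ν.restrict A = ν.restrict A := inf_eq_right.mpr hresle
  -- compute tvDist of the truncated measure
  have htv : tvDist ν (ν.restrict A) = ν.restrict Aᶜ := by
    rw [tvDist, hinf, Measure.sub_self, add_zero]
    ext s hs
    rw [Measure.sub_apply hs hresle, Measure.restrict_apply hs, Measure.restrict_apply hs]
    have hfin : ν (s ∩ A) ≠ ⊤ :=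
      ne_of_lt (lt_of_le_of_lt (measure_mono (inter_subset_right)) hνAfin.lt_top)
    rw [← measure_inter_add_diff s hAmeas, ENNReal.add_sub_cancel_left hfin, diff_eq]
  have hJres : Jfun2 ν (ν.restrict A) = ∫⁻ y in {y : ℝ | y ^ 2 ≤ ε}, f y ∂ν := by
    rw [Jfun2, htv, hAcompl]
  refine ⟨?_, hJres⟩
  intro νb hνbfin hνbmass
  rw [hJres]
  set m : Measure ℝ := ν ⊓ νb with hm
  have hmleν : m ≤ ν := inf_le_left
  have hmleνb : m ≤ νb := inf_le_right
  have hmfin : IsFiniteMeasure m := isFiniteMeasure_of_le νb hmleνb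
  -- ν = (ν - m) + m
  have hsplit : (ν - m) + m = ν := Measure.sub_add_cancel_of_le hmleν
  have hlsplit : ∫⁻ y, f y ∂ν = (∫⁻ y, f y ∂(ν - m)) + ∫⁻ y, f y ∂m := by
    conv_lhs => rw [← hsplit]
    exact lintegral_add_measure _ _ _
  -- key estimate: ∫ f dm ≤ ∫_A f dν
  have hmA_fin : m A ≠ ⊤ := ne_of_lt (lt_of_le_of_lt (hmleν A) hνAfin.lt_top)
  have hsubA : (ν - m) A = ν A - m A := Measure.sub_apply hAmeas hmleν
  have hmAc_le : m Aᶜ ≤ (ν - m) A := by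
    rw [hsubA, hmass]
    have h1 : m Aᶜ = m univ - m A := measure_compl hAmeas hmA_fin
    have h2 : m univ ≤ ENNReal.ofReal Λ := by
      rw [← hνbmass]; exact hmleνb univ
    rw [h1]
    exact tsub_le_tsub_right h2 _
  have hfleA : ∀ y ∈ Aᶜ, f y ≤ ENNReal.ofReal ε := by
    intro y hy
    rw [hAcompl] at hy
    exact ENNReal.ofReal_le_ofReal hy
  have hstep1 : ∫⁻ y in Aᶜ, f y ∂m ≤ ENNReal.ofReal ε * m Aᶜ := by
    calc ∫⁻ y in Aᶜ, f y ∂m ≤ ∫⁻ _ in Aᶜ, ENNReal.ofReal ε ∂m :=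
          setLIntegral_mono' hAmeas.compl hfleA
      _ = ENNReal.ofReal ε * m Aᶜ := setLIntegral_const _ _
  have hstep2 : ENNReal.ofReal ε * (ν - m) A ≤ ∫⁻ y in A, f y ∂(ν - m) := by
    rw [← setLIntegral_const A (ENNReal.ofReal ε)]
    refine setLIntegral_mono' hAmeas fun y hy => ?_
    exact ENNReal.ofReal_le_ofReal (le_of_lt hy)
  have hkey : ∫⁻ y, f y ∂m ≤ ∫⁻ y in A, f y ∂ν := by
    have h1 : ∫⁻ y, f y ∂m = (∫⁻ y in A, f y ∂m) + ∫⁻ y in Aᶜ, f y ∂m :=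
      (lintegral_add_compl _ hAmeas).symm
    have h2 : ∫⁻ y in Aᶜ, f y ∂m ≤ ∫⁻ y in A, f y ∂(ν - m) :=
      le_trans hstep1 (le_trans (mul_le_mul_right hmAc_le _) hstep2)
    have h3 : (∫⁻ y in A, f y ∂m) + ∫⁻ y in A, f y ∂(ν - m) = ∫⁻ y in A, f y ∂ν := by
      conv_rhs => rw [← hsplit]
      rw [Measure.restrict_add, lintegral_add_measure, add_comm]
    calc ∫⁻ y, f y ∂m = (∫⁻ y in A, f y ∂m) + ∫⁻ y in Aᶜ, f y ∂m := h1
      _ ≤ (∫⁻ y in A, f y ∂m) + ∫⁻ y in A, f y ∂(ν - m) := add_le_add_right h2 _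
      _ = ∫⁻ y in A, f y ∂ν := h3
  -- J(νb) ≥ ∫ f d(ν - m) ≥ ∫_{Aᶜ} f dν
  have hJlb : ∫⁻ y, f y ∂(ν - m) ≤ Jfun2 ν νb := by
    rw [Jfun2, tvDist, lintegral_add_measure]
    exact le_self_add
  have hfinA : (∫⁻ y in A, f y ∂ν) ≠ ⊤ := by
    refine ne_of_lt (lt_of_le_of_lt ?_ hν2)
    exact setLIntegral_le_lintegral _ _
  have hfinal : ∫⁻ y in {y : ℝ | y ^ 2 ≤ ε}, f y ∂ν ≤ ∫⁻ y, f y ∂(ν - m) := by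
    rw [← hAcompl]
    have h1 : (∫⁻ y in A, f y ∂ν) + ∫⁻ y in Aᶜ, f y ∂ν = ∫⁻ y, f y ∂ν :=
      lintegral_add_compl _ hAmeas
    rw [← ENNReal.add_sub_cancel_left hfinA (b := ∫⁻ y in Aᶜ, f y ∂ν), h1]
    rw [hlsplit]
    refine tsub_le_iff_left.mpr ?_
    rw [add_comm (∫⁻ y in A, f y ∂ν)]
    exact add_le_add_right hkey _
  exact le_trans hfinal hJlb
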